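/- Let n and m be natural numbers and let d_1,…,d_n, g_1,…,g_m be rational numbers; assume that m ≥ 1 or that at least two of the d_i are not integers. For every positive integer k set f(k) := −(1/k)·(−1 + Σ_{i=1}^{n} ⌈d_i·k⌉ + Σ_{j=1}^{m} (⌊g_j·k⌋ + 1)). Suppose y₊ ∈ ℚ is the least element of the set { f(k) : k a positive integer }, and let k₊ be the least positive integer with f(k₊) = y₊. Then k₊ is the denominator of y₊, i.e., k₊ is the least positive integer k such that k·y₊ is an integer. -/

import Mathlib

/-- Proposition 4.5 (right-hand endpoint): assuming the manifold is not a solid torus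
(`m ≥ 1` or at least two `dᵢ` non-integral), if `y₊` is the least element of
`{f k : k > 0}` with `f k = -(1/k)(-1 + Σ⌈dᵢk⌉ + Σ(⌊gⱼk⌋+1))`, then the least positive
`k` with `f k = y₊` is the denominator of `y₊`. -/
theorem stmt_9 (n m : ℕ) (d : Fin n → ℚ) (g : Fin m → ℚ)
    (hnst : 1 ≤ m ∨ ∃ i j : Fin n, i ≠ j ∧
      (¬∃ z : ℤ, (z:ℚ) = d i) ∧ (¬∃ z : ℤ, (z:ℚ) = d j))
    (f : ℕ → ℚ)
    (hf : ∀ k : ℕ, 0 < k →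
      f k = -(1/(k:ℚ)) * (-1 + (∑ i, (⌈d i * (k:ℚ)⌉ : ℚ))
        + ∑ j, ((⌊g j * (k:ℚ)⌋ : ℚ) + 1)))
    (ypos : ℚ)
    (hy : IsLeast {x : ℚ | ∃ k : ℕ, 0 < k ∧ x = f k} ypos)
    (kpos : ℕ)
    (hk : IsLeast {k : ℕ | 0 < k ∧ f k = ypos} kpos) :
    IsLeast {k : ℕ | 0 < k ∧ ∃ z : ℤ, (z:ℚ) = (k:ℚ) * ypos} kpos := by
  obtain ⟨⟨hk0, hfk⟩, hkmin⟩ := hk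
  obtain ⟨-, hy2⟩ := hy
  -- the integer `k * f k`
  set E : ℕ → ℤ := fun k =>
    1 - ∑ i, ⌈d i * (k:ℚ)⌉ - ∑ j, ⌊g j * (k:ℚ)⌋ - m with hEdef
  have hE : ∀ k : ℕ, 0 < k → (k:ℚ) * f k = (E k : ℚ) := by
    intro k hkp
    have hkne : (k:ℚ) ≠ 0 := Nat.cast_ne_zero.2 hkp.ne'
    rw [hf k hkp, hEdef]
    push_cast [Finset.sum_add_distrib]
    field_simp
    simp only [Finset.sum_const, Finset.card_univ, Fintype.card_fin, nsmul_eq_mul, mul_one]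
    ring
  set q := ypos.den with hq
  have hq0 : 0 < q := ypos.pos
  have hqy : (q:ℚ) * ypos = (ypos.num : ℚ) := by
    conv_lhs => rw [← Rat.num_div_den ypos]
    have : (q:ℚ) ≠ 0 := Nat.cast_ne_zero.2 hq0.ne'
    field_simp
    rw [hq]; ring
  have hmem : (E kpos : ℚ) = (kpos:ℚ) * ypos := by rw [← hfk, hE kpos hk0]
  -- any k with k*ypos ∈ ℤ is divisible by q
  have hqdvd : ∀ k : ℕ, 0 < k → ∀ z : ℤ, (z:ℚ) = (k:ℚ) * ypos → q ∣ k := by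
    intro k hkp z hz
    have hkne : (k:ℚ) ≠ 0 := Nat.cast_ne_zero.2 hkp.ne'
    have hy' : ypos = Rat.divInt z k := by
      rw [Rat.divInt_eq_div]
      push_cast
      field_simp
      linarith [hz]
    have := Rat.den_dvd z (k : ℤ)
    rw [← hy', ← hq] at this
    exact_mod_cast this
  -- q divides kpos
  obtain ⟨t, hkt⟩ := hqdvd kpos hk0 (E kpos) hmem
  have ht0 : 0 < t := by
    rcases Nat.eq_zero_or_pos t with h | h
    · rw [h, mul_zero] at hkt; omega
    · exact h
  -- ceiling / floor inequalities
  have hceil : ∀ i, ⌈d i * (kpos:ℚ)⌉ ≤ (t:ℤ) * ⌈d i * (q:ℚ)⌉ := by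
    intro i
    rw [Int.ceil_le]
    have h1 : d i * (kpos:ℚ) = (d i * q) * t := by rw [hkt]; push_cast; ring
    rw [h1]
    push_cast
    calc d i * q * t ≤ (⌈d i * (q:ℚ)⌉ : ℚ) * t :=
          mul_le_mul_of_nonneg_right (Int.le_ceil _) (by positivity)
      _ = (t:ℚ) * ⌈d i * (q:ℚ)⌉ := by ring
  have hfloor : ∀ j, ⌊g j * (kpos:ℚ)⌋ ≤ (t:ℤ) * ⌊g j * (q:ℚ)⌋ + ((t:ℤ) - 1) := by
    intro j
    have : ⌊g j * (kpos:ℚ)⌋ < (t:ℤ) * ⌊g j * (q:ℚ)⌋ + (t:ℤ) := by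
      rw [Int.floor_lt]
      have h1 : g j * (kpos:ℚ) = (g j * q) * t := by rw [hkt]; push_cast; ring
      rw [h1]
      push_cast
      have htq : (0:ℚ) < (t:ℚ) := by exact_mod_cast ht0
      calc g j * q * t < ((⌊g j * (q:ℚ)⌋ : ℚ) + 1) * t :=
            mul_lt_mul_of_pos_right (Int.lt_floor_add_one _) htq
        _ = (t:ℚ) * ⌊g j * (q:ℚ)⌋ + (t:ℚ) := by ring
    omega
  have h1 : ∑ i, ⌈d i * (kpos:ℚ)⌉ ≤ (t:ℤ) * ∑ i, ⌈d i * (q:ℚ)⌉ := by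
    rw [Finset.mul_sum]; exact Finset.sum_le_sum fun i _ => hceil i
  have h2 : ∑ j, ⌊g j * (kpos:ℚ)⌋ ≤ (t:ℤ) * ∑ j, ⌊g j * (q:ℚ)⌋ + (m:ℤ) * ((t:ℤ) - 1) := by
    calc ∑ j, ⌊g j * (kpos:ℚ)⌋ ≤ ∑ _j : Fin m, ((t:ℤ) * ⌊g _j * (q:ℚ)⌋ + ((t:ℤ) - 1)) :=
          Finset.sum_le_sum fun j _ => hfloor j
      _ = (t:ℤ) * ∑ j, ⌊g j * (q:ℚ)⌋ + (m:ℤ) * ((t:ℤ) - 1) := by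
          rw [Finset.sum_add_distrib, Finset.mul_sum]
          simp [mul_comm]
          ring
  have hEineq : (t:ℤ) * E q - ((t:ℤ) - 1) ≤ E kpos := by
    simp only [hEdef]
    have e : (t:ℤ) * (1 - ∑ i, ⌈d i * (q:ℚ)⌉ - ∑ j, ⌊g j * (q:ℚ)⌋ - m) - ((t:ℤ) - 1)
        = 1 - (t:ℤ) * ∑ i, ⌈d i * (q:ℚ)⌉
          - ((t:ℤ) * ∑ j, ⌊g j * (q:ℚ)⌋ + (m:ℤ) * ((t:ℤ) - 1)) - m
          + ((m:ℤ) * ((t:ℤ) - 1) - ((t:ℤ) - 1) * ((m:ℤ) - 1) - ((t:ℤ) - 1)) := by ring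
    have e2 : (m:ℤ) * ((t:ℤ) - 1) - ((t:ℤ) - 1) * ((m:ℤ) - 1) - ((t:ℤ) - 1) = 0 := by ring
    linarith [h1, h2]
  -- E kpos = t * ypos.num
  have hN : E kpos = (t:ℤ) * ypos.num := by
    have : (E kpos : ℚ) = ((t:ℤ) * ypos.num : ℚ) := by
      rw [hmem, hkt]
      push_cast
      rw [mul_comm (q:ℚ) (t:ℚ), mul_assoc, hqy]
    exact_mod_cast this
  -- conclude E q ≤ ypos.num
  have hEqN : E q ≤ ypos.num := by
    by_contra h
    push_neg at h
    have hm0 : (0:ℤ) ≤ (m:ℤ) := by positivity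
    have ht1 : (1:ℤ) ≤ (t:ℤ) := by exact_mod_cast ht0
    nlinarith [hEineq, hN, h, mul_nonneg (by linarith : (0:ℤ) ≤ (t:ℤ) - 1) hm0]
  -- hence f q = ypos
  have hfq : f q = ypos := by
    have hyq : ypos ≤ f q := hy2 ⟨q, hq0, rfl⟩
    have hle : (q:ℚ) * f q ≤ (q:ℚ) * ypos := by
      rw [hE q hq0, hqy]; exact_mod_cast hEqN
    have hqpos : (0:ℚ) < q := by exact_mod_cast hq0
    have : f q ≤ ypos := le_of_mul_le_mul_left hle hqpos
    linarith
  have hkq : kpos ≤ q := hkmin ⟨hq0, hfq⟩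
  constructor
  · exact ⟨hk0, ⟨E kpos, hmem⟩⟩
  · intro k hkset
    obtain ⟨hkp, z, hz⟩ := hkset
    have := Nat.le_of_dvd hkp (hqdvd k hkp z hz)
    omega
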